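/- For N ≥ 2, 0 ≤ i ≤ l ≤ k and 0 ≤ i' ≤ l' ≤ k, the doubly refined partial characters satisfy χ^N_k[i,l;i',l'](q,z₁,z₂) = q^{(N−1)(l'−i')} · (z₁z₂)^{l'−i'−l+i} · χ^N_k[i',l';i,l](q^{−1}, z₁, q^{N−1}z₂), as an identity of Laurent polynomials in q, z₁, z₂. -/

import Mathlib

/-- `(α,β,γ)` is an admissible Verlinde triple of level `k`. -/
def IsAdm (k α β γ : ℕ) : Prop :=
  ∃ x y z : ℕ, x + y + z ≤ k ∧ α = x + y ∧ β = y + z ∧ γ = x + z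
/-- `x(α,β,γ) = (α+γ-β)/2` (exact on admissible triples). -/
def xA (α β γ : ℕ) : ℕ := (α + γ - β) / 2
/-- `y(α,β,γ) = (α+β-γ)/2` (exact on admissible triples). -/
def yA (α β γ : ℕ) : ℕ := (α + β - γ) / 2
/-- `z(α,β,γ) = (β+γ-α)/2` (exact on admissible triples). -/
def zA (α β γ : ℕ) : ℕ := (β + γ - α) / 2
/-- `α, β : ℕ → ℕ` represent a Verlinde path `(α₁,…,α_N; β₁,…,β_{N-1})` of
length `N`, level `k` and weight `l`: the values at `0` are dummy zeros, and
the conventions `β_N = α_N`, `α_i = β_i = 0` for `i > N` are imposed. -/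
def IsVerPath (k l N : ℕ) (α β : ℕ → ℕ) : Prop :=
  α 0 = 0 ∧ β 0 = 0 ∧ α 1 = l ∧ β N = α N ∧
  (∀ i, N < i → α i = 0) ∧ (∀ i, N < i → β i = 0) ∧
  (∀ i, 1 ≤ i → IsAdm k (α i) (β i) (α (i + 1)))
/-- The `a`-entries associated to a Verlinde path:
`a_{i-1} = y(α_i, β_i, α_{i+1})`. -/
def iotaA (α β : ℕ → ℕ) (i : ℕ) : ℕ := yA (α (i + 1)) (β (i + 1)) (α (i + 2))

/-- The `b`-entries associated to a Verlinde path: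
`b_i = z(α_i,β_i,α_{i+1}) - (y(α_{i+1},β_{i+1},α_{i+2}) - x(α_i,β_i,α_{i+1}))⁺`
for `i ≥ 1`, with the dummy value `b_0 = 0`. -/
def iotaB (α β : ℕ → ℕ) (i : ℕ) : ℕ :=
  if i = 0 then 0 else
    zA (α i) (β i) (α (i + 1)) -
      (yA (α (i + 1)) (β (i + 1)) (α (i + 2)) - xA (α i) (β i) (α (i + 1)))

/-- The energy grading `e(α;β) = Σ_{i=1}^{N-1} i (a_i + b_i)`. -/
def eGr (N : ℕ) (α β : ℕ → ℕ) : ℕ :=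
  ∑ i ∈ Finset.Icc 1 (N - 1), i * (iotaA α β i + iotaB α β i)

/-- The grading `s₁(α;β) = Σ_{i=1}^{N-1} b_i`. -/
def s1Gr (N : ℕ) (α β : ℕ → ℕ) : ℕ :=
  ∑ i ∈ Finset.Icc 1 (N - 1), iotaB α β i

/-- The grading `s₂(α;β) = a_0 + Σ_{i=1}^{N-1} (a_i + b_i)`. -/
def s2Gr (N : ℕ) (α β : ℕ → ℕ) : ℕ :=
  iotaA α β 0 + ∑ i ∈ Finset.Icc 1 (N - 1), (iotaA α β i + iotaB α β i)

open Classical in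
/-- The doubly refined partial character `χ^N_k[i,l;i',l'](q,z₁,z₂)`, an
element of the ring of Laurent polynomials in `q = X(1,0,0)`, `z₁ = X(0,1,0)`,
`z₂ = X(0,0,1)`, realized as the group algebra `ℤ[ℤ³]`: the sum of
`q^e z₁^{s₁} z₂^{s₂}` over all Verlinde paths of length `N`, level `k`,
weight `l` with `α₁+β₁-α₂ = 2i`, `α_N = l'` and `α_N+β_{N-1}-α_{N-1} = 2i'`. -/
noncomputable def chiBoth (k N i l i' l' : ℕ) : AddMonoidAlgebra ℤ (ℤ × ℤ × ℤ) :=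
  ∑ᶠ (p : (ℕ → ℕ) × (ℕ → ℕ))
      (_ : IsVerPath k l N p.1 p.2 ∧ p.1 1 + p.2 1 = p.1 2 + 2 * i ∧
           p.1 N = l' ∧ p.1 N + p.2 (N - 1) = p.1 (N - 1) + 2 * i'),
    AddMonoidAlgebra.single
      ((eGr N p.1 p.2 : ℤ), (s1Gr N p.1 p.2 : ℤ), (s2Gr N p.1 p.2 : ℤ)) 1

/-- The substitution `q ↦ q⁻¹`, `z₂ ↦ q^{N-1} z₂` on Laurent polynomials in
`q,z₁,z₂`: on exponents `(a,b,c) ↦ (-a+(N-1)c, b, c)`. -/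
noncomputable def subInvQ (N : ℕ) (p : AddMonoidAlgebra ℤ (ℤ × ℤ × ℤ)) :
    AddMonoidAlgebra ℤ (ℤ × ℤ × ℤ) :=
  AddMonoidAlgebra.ofCoeff
    (Finsupp.mapDomain (fun v => (-v.1 + ((N : ℤ) - 1) * v.2.2, v.2.1, v.2.2)) p.coeff)

lemma IsAdm.facts {k a b c : ℕ} (h : IsAdm k a b c) :
    xA a b c + yA a b c = a ∧ yA a b c + zA a b c = b ∧ xA a b c + zA a b c = c ∧
    a ≤ k ∧ b ≤ k ∧ c ≤ k := by
  obtain ⟨x, y, z, h1, h2, h3, h4⟩ := h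
  simp only [xA, yA, zA]
  omega

lemma IsAdm.rev {k a b c : ℕ} (h : IsAdm k a b c) : IsAdm k c b a := by
  obtain ⟨x, y, z, h1, h2, h3, h4⟩ := h
  exact ⟨x, z, y, by omega, by omega, by omega, by omega⟩

lemma xA_rev (a b c : ℕ) : xA c b a = xA a b c := by unfold xA; omega
lemma yA_rev (a b c : ℕ) : yA c b a = zA a b c := by unfold yA zA; omega
lemma zA_rev (a b c : ℕ) : zA c b a = yA a b c := by unfold zA yA; omega

/-- first component of the reversed path -/
def rev1 (N : ℕ) (α : ℕ → ℕ) : ℕ → ℕ := fun j => α (N + 1 - j)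
/-- second component of the reversed path -/
def rev2 (N : ℕ) (α β : ℕ → ℕ) : ℕ → ℕ :=
  fun j => if j = 0 then 0 else if j = N then α 1 else β (N - j)

lemma rev1_apply (N : ℕ) (α : ℕ → ℕ) (j : ℕ) : rev1 N α j = α (N + 1 - j) := rfl
lemma rev2_zero (N : ℕ) (α β : ℕ → ℕ) : rev2 N α β 0 = 0 := rfl
lemma rev2_top (N : ℕ) (α β : ℕ → ℕ) (hN : N ≠ 0) : rev2 N α β N = α 1 := by
  simp [rev2, hN]
lemma rev2_mid (N : ℕ) (α β : ℕ → ℕ) {j : ℕ} (h1 : j ≠ 0) (h2 : j ≠ N) :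
    rev2 N α β j = β (N - j) := by simp [rev2, h1, h2]

section Path
variable {k w N : ℕ} {α β : ℕ → ℕ}

lemma rev_isVerPath (hN : 2 ≤ N) (hp : IsVerPath k w N α β) :
    IsVerPath k (α N) N (rev1 N α) (rev2 N α β) := by
  obtain ⟨hα0, hβ0, hα1, hβN, hαt, hβt, hadm⟩ := hp
  refine ⟨?_, ?_, ?_, ?_, ?_, ?_, ?_⟩
  · show α (N + 1 - 0) = 0; exact hαt _ (by omega)
  · exact rev2_zero N α β
  · show α (N + 1 - 1) = α N; rfl
  · rw [rev2_top N α β (by omega), rev1_apply]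
    have : N + 1 - N = 1 := by omega
    rw [this]
  · intro j hj
    rw [rev1_apply]
    rcases Nat.lt_or_ge j (N + 1) with h | h
    · omega
    · have : N + 1 - j = 0 := by omega
      rw [this, hα0]
  · intro j hj
    rw [rev2_mid N α β (by omega) (by omega)]
    have : N - j = 0 := by omega
    rw [this, hβ0]
  · intro j hj
    rw [rev1_apply, rev1_apply]
    rcases Nat.lt_or_ge j N with h | h
    · have e1 : N + 1 - j = (N - j) + 1 := by omega
      have e2 : N + 1 - (j + 1) = N - j := by omega
      rw [e1, e2, rev2_mid N α β (by omega) (by omega)]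
      exact (hadm (N - j) (by omega)).rev
    rcases Nat.eq_or_lt_of_le h with h' | h'
    · subst h'
      have e1 : N + 1 - N = 1 := by omega
      have e2 : N + 1 - (N + 1) = 0 := by omega
      rw [e1, e2, hα0, rev2_top N α β (by omega)]
      have hle : α 1 ≤ k := ((hadm 1 le_rfl).facts).2.2.2.1
      exact ⟨0, α 1, 0, by omega, by omega, by omega, by omega⟩
    · have e1 : N + 1 - j = 0 := by omega
      have e2 : N + 1 - (j + 1) = 0 := by omega
      rw [e1, e2, hα0, rev2_mid N α β (by omega) (by omega)]
      have : N - j = 0 := by omega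
      rw [this, hβ0]
      exact ⟨0, 0, 0, by omega, by omega, by omega, by omega⟩

lemma rev_rev (hN : 2 ≤ N) (hp : IsVerPath k w N α β) :
    rev1 N (rev1 N α) = α ∧ rev2 N (rev1 N α) (rev2 N α β) = β := by
  obtain ⟨hα0, hβ0, hα1, hβN, hαt, hβt, hadm⟩ := hp
  constructor
  · funext j
    rw [rev1_apply, rev1_apply]
    rcases Nat.lt_or_ge j (N + 1) with h | h
    · congr 1; omega
    · have e1 : N + 1 - j = 0 := by omega
      rw [e1]; simp only [Nat.sub_zero]
      rw [hαt _ (by omega), hαt _ (by omega)]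
  · funext j
    rcases Nat.eq_or_lt_of_le (Nat.zero_le j) with h0 | h0
    · rw [← h0, rev2_zero, hβ0]
    rcases Nat.lt_or_ge j N with h | h
    · rw [rev2_mid _ _ _ (by omega) (by omega), rev2_mid _ _ _ (by omega) (by omega)]
      congr 1; omega
    rcases Nat.eq_or_lt_of_le h with h' | h'
    · subst h'
      rw [rev2_top _ _ _ (by omega), rev1_apply, hβN]
      rfl
    · rw [rev2_mid _ _ _ (by omega) (by omega)]
      have : N - j = 0 := by omega
      rw [this, rev2_zero, hβt _ h']

end Path

section Grading
variable {k w N : ℕ} {α β : ℕ → ℕ}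

/-- `a'_{N-1-m} = z_m` for `1 ≤ m ≤ N-2`. -/
lemma A_rev_mid (hN : 2 ≤ N) {m : ℕ} (h1 : 1 ≤ m) (h2 : m ≤ N - 2) :
    iotaA (rev1 N α) (rev2 N α β) (N - 1 - m) = zA (α m) (β m) (α (m + 1)) := by
  obtain ⟨t, ht⟩ : ∃ t, N = m + t + 2 := ⟨N - m - 2, by omega⟩
  subst ht
  have e0 : m + t + 2 - 1 - m = t + 1 := by omega
  rw [e0]
  show yA (rev1 _ α (t + 2)) (rev2 _ α β (t + 2)) (rev1 _ α (t + 3)) = _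
  rw [rev1_apply, rev1_apply, rev2_mid _ _ _ (by omega) (by omega)]
  have e1 : m + t + 2 + 1 - (t + 2) = m + 1 := by omega
  have e2 : m + t + 2 - (t + 2) = m := by omega
  have e3 : m + t + 2 + 1 - (t + 3) = m := by omega
  rw [e1, e2, e3, yA_rev]

/-- `b'_{N-1-m}` for `1 ≤ m ≤ N-2`. -/
lemma B_rev_mid (hN : 2 ≤ N) {m : ℕ} (h1 : 1 ≤ m) (h2 : m ≤ N - 2) :
    iotaB (rev1 N α) (rev2 N α β) (N - 1 - m) =
      yA (α (m + 1)) (β (m + 1)) (α (m + 2)) -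
        (zA (α m) (β m) (α (m + 1)) - xA (α (m + 1)) (β (m + 1)) (α (m + 2))) := by
  obtain ⟨t, ht⟩ : ∃ t, N = m + t + 2 := ⟨N - m - 2, by omega⟩
  subst ht
  have e0 : m + t + 2 - 1 - m = t + 1 := by omega
  rw [e0]
  show (if t + 1 = 0 then 0 else _) = _
  rw [if_neg (by omega)]
  rw [rev1_apply, rev1_apply, rev1_apply, rev2_mid _ _ _ (by omega) (by omega),
    rev2_mid _ _ _ (by omega) (by omega)]
  have e1 : m + t + 2 + 1 - (t + 1) = m + 2 := by omega
  have e2 : m + t + 2 - (t + 1) = m + 1 := by omega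
  have e3 : m + t + 2 + 1 - (t + 2) = m + 1 := by omega
  have e4 : m + t + 2 - (t + 2) = m := by omega
  have e5 : m + t + 2 + 1 - (t + 3) = m := by omega
  rw [e1, e2, e3, e4, e5, yA_rev, zA_rev, xA_rev]

/-- `a'_{N-1} = α 1`. -/
lemma A_rev_top (hN : 2 ≤ N) (hp : IsVerPath k w N α β) :
    iotaA (rev1 N α) (rev2 N α β) (N - 1) = α 1 := by
  obtain ⟨hα0, hβ0, hα1, hβN, hαt, hβt, hadm⟩ := hp
  have e0 : N - 1 + 1 = N := by omega
  have e1 : N - 1 + 2 = N + 1 := by omega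
  show yA (rev1 _ α (N - 1 + 1)) (rev2 _ α β (N - 1 + 1)) (rev1 _ α (N - 1 + 2)) = _
  rw [e0, e1, rev1_apply, rev1_apply, rev2_top _ _ _ (by omega)]
  have e2 : N + 1 - N = 1 := by omega
  have e3 : N + 1 - (N + 1) = 0 := by omega
  rw [e2, e3, hα0]
  unfold yA; omega

/-- `b'_{N-1} = 0`. -/
lemma B_rev_top (hN : 2 ≤ N) (hp : IsVerPath k w N α β) :
    iotaB (rev1 N α) (rev2 N α β) (N - 1) = 0 := by
  have htop := A_rev_top hN hp
  obtain ⟨hα0, hβ0, hα1, hβN, hαt, hβt, hadm⟩ := hp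
  have e0 : N - 1 + 1 = N := by omega
  show (if N - 1 = 0 then 0 else _) = 0
  rw [if_neg (by omega)]
  unfold iotaA at htop
  rw [e0] at htop ⊢
  rw [htop, rev1_apply, rev1_apply, rev2_mid _ _ _ (by omega) (by omega)]
  have e1 : N + 1 - (N - 1) = 2 := by omega
  have e2 : N - (N - 1) = 1 := by omega
  have e3 : N + 1 - N = 1 := by omega
  rw [e1, e2, e3, zA_rev, xA_rev]
  have h1 := (hadm 1 le_rfl).facts
  rw [show (1:ℕ) + 1 = 2 from rfl] at h1
  omega

/-- `a'_0 = z_{N-1}`. -/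
lemma A_rev_zero (hN : 2 ≤ N) :
    iotaA (rev1 N α) (rev2 N α β) 0 = zA (α (N - 1)) (β (N - 1)) (α N) := by
  show yA (rev1 _ α 1) (rev2 _ α β 1) (rev1 _ α 2) = _
  rw [rev1_apply, rev1_apply, rev2_mid _ _ _ (by omega) (by omega)]
  have e1 : N + 1 - 1 = N := by omega
  have e2 : N + 1 - 2 = N - 1 := by omega
  rw [e1, e2, yA_rev]

/-- `c_{N-1} = α N` (uses triples `N-1` and `N`). -/
lemma C_top (hN : 2 ≤ N) (hp : IsVerPath k w N α β) :
    iotaA α β (N - 1) + iotaB α β (N - 1) = α N := by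
  obtain ⟨hα0, hβ0, hα1, hβN, hαt, hβt, hadm⟩ := hp
  have e0 : N - 1 + 1 = N := by omega
  have e1 : N - 1 + 2 = N + 1 := by omega
  unfold iotaA iotaB
  rw [if_neg (by omega), e0, e1, hαt (N + 1) (by omega)]
  have hN1 := (hadm (N - 1) (by omega)).facts
  have hNN := (hadm N (by omega)).facts
  rw [e0] at hN1
  rw [hαt (N + 1) (by omega)] at hNN
  omega

/-- `c'_{N-1-m} = c_m` for `1 ≤ m ≤ N-2`. -/
lemma C_rev (hN : 2 ≤ N) (hp : IsVerPath k w N α β) {m : ℕ} (h1 : 1 ≤ m) (h2 : m ≤ N - 2) :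
    iotaA (rev1 N α) (rev2 N α β) (N - 1 - m) + iotaB (rev1 N α) (rev2 N α β) (N - 1 - m) =
      iotaA α β m + iotaB α β m := by
  obtain ⟨hα0, hβ0, hα1, hβN, hαt, hβt, hadm⟩ := hp
  rw [A_rev_mid hN h1 h2, B_rev_mid hN h1 h2]
  unfold iotaA iotaB
  rw [if_neg (by omega)]
  have hm := (hadm m (by omega)).facts
  have hm1 := (hadm (m + 1) (by omega)).facts
  have e : m + 1 + 1 = m + 2 := rfl
  rw [e] at hm1
  omega

end Grading

section Sums
variable {k w N : ℕ} {α β : ℕ → ℕ}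

lemma sum_split (hN : 2 ≤ N) (f : ℕ → ℕ) :
    ∑ j ∈ Finset.Icc 1 (N - 1), f j = (∑ j ∈ Finset.Icc 1 (N - 2), f j) + f (N - 1) := by
  have h : N - 1 = (N - 2) + 1 := by omega
  rw [h, Finset.sum_Icc_succ_top (by omega)]

lemma sum_reflect (hN : 2 ≤ N) (f g : ℕ → ℕ)
    (h : ∀ m, 1 ≤ m → m ≤ N - 2 → g (N - 1 - m) = f m) :
    ∑ j ∈ Finset.Icc 1 (N - 2), g j = ∑ m ∈ Finset.Icc 1 (N - 2), f m := by
  refine Finset.sum_nbij' (fun j => N - 1 - j) (fun m => N - 1 - m) ?_ ?_ ?_ ?_ ?_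
  · intro a ha; simp only [Finset.mem_Icc] at *; omega
  · intro a ha; simp only [Finset.mem_Icc] at *; omega
  · intro a ha; simp only [Finset.mem_Icc] at ha; omega
  · intro a ha; simp only [Finset.mem_Icc] at ha; omega
  · intro a ha; simp only [Finset.mem_Icc] at ha
    have := h (N - 1 - a) (by omega) (by omega)
    have e : N - 1 - (N - 1 - a) = a := by omega
    rw [e] at this
    exact this

/-- shift of summation for a function vanishing appropriately. -/
lemma sum_shift (hN : 2 ≤ N) (F : ℕ → ℕ) :
    (∑ m ∈ Finset.Icc 1 (N - 1), F (m + 1)) + F 1 =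
      (∑ m ∈ Finset.Icc 1 (N - 1), F m) + F N := by
  have h1 : ∑ m ∈ Finset.Icc 1 (N - 1), F (m + 1) = ∑ j ∈ Finset.Icc 2 N, F j := by
    refine Finset.sum_nbij' (fun m => m + 1) (fun j => j - 1) ?_ ?_ ?_ ?_ ?_
    · intro a ha; simp only [Finset.mem_Icc] at *; omega
    · intro a ha; simp only [Finset.mem_Icc] at *; omega
    · intro a ha; simp only [Finset.mem_Icc] at ha; omega
    · intro a ha; simp only [Finset.mem_Icc] at ha; omega
    · intro a ha; rfl
  have h2 : ∑ j ∈ Finset.Icc 1 N, F j = F 1 + ∑ j ∈ Finset.Icc 2 N, F j := by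
    rw [← Finset.insert_Icc_add_one_left_eq_Icc (by omega : 1 ≤ N), Finset.sum_insert (by
      simp only [Finset.mem_Icc]; omega)]
    rfl
  have h3 : ∑ j ∈ Finset.Icc 1 N, F j = (∑ j ∈ Finset.Icc 1 (N - 1), F j) + F N := by
    have h : N = (N - 1) + 1 := by omega
    rw [h, Finset.sum_Icc_succ_top (by omega)]
    rw [← h]
  omega

/-- The telescoped identity `Σ_{m=1}^{N-1} a_m = Σ_{m=1}^{N-1} z_m + x_1`. -/
lemma sumA_p (hN : 2 ≤ N) (hp : IsVerPath k w N α β) :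
    ∑ m ∈ Finset.Icc 1 (N - 1), iotaA α β m =
      (∑ m ∈ Finset.Icc 1 (N - 1), zA (α m) (β m) (α (m + 1))) +
        xA (α 1) (β 1) (α 2) := by
  obtain ⟨hα0, hβ0, hα1, hβN, hαt, hβt, hadm⟩ := hp
  set F : ℕ → ℕ := fun m => xA (α m) (β m) (α (m + 1)) with hF
  have step : ∀ m ∈ Finset.Icc 1 (N - 1),
      F m + zA (α m) (β m) (α (m + 1)) = F (m + 1) + iotaA α β m := by
    intro m hm
    simp only [Finset.mem_Icc] at hm
    have h1 := (hadm m (by omega)).facts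
    have h2 := (hadm (m + 1) (by omega)).facts
    rw [show m + 1 + 1 = m + 2 from rfl] at h2
    simp only [hF, iotaA, show m + 1 + 1 = m + 2 from rfl]
    omega
  have hsum := Finset.sum_congr rfl step
  rw [Finset.sum_add_distrib, Finset.sum_add_distrib] at hsum
  have hshift := sum_shift hN F
  have hFN : F N = 0 := by
    simp only [hF]
    rw [hβN, hαt (N + 1) (by omega)]
    unfold xA; omega
  have hF1 : F 1 = xA (α 1) (β 1) (α 2) := rfl
  omega

end Sums

section Exps
variable {k w N : ℕ} {α β : ℕ → ℕ}

lemma exps_rev (hN : 2 ≤ N) (hp : IsVerPath k w N α β) :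
    ((eGr N (rev1 N α) (rev2 N α β) : ℤ) + eGr N α β + ((N : ℤ) - 1) * iotaA α β 0
        = ((N : ℤ) - 1) * α 1 + ((N : ℤ) - 1) * s2Gr N α β) ∧
    (s1Gr N (rev1 N α) (rev2 N α β) + α N + iotaA α β 0
        = s1Gr N α β + α 1 + zA (α (N - 1)) (β (N - 1)) (α N)) ∧
    (s2Gr N (rev1 N α) (rev2 N α β) + α N + iotaA α β 0
        = s2Gr N α β + α 1 + zA (α (N - 1)) (β (N - 1)) (α N)) := by
  set α' := rev1 N α with hα'
  set β' := rev2 N α β with hβ'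
  -- sums of C
  have hSC : ∑ m ∈ Finset.Icc 1 (N - 1), (iotaA α β m + iotaB α β m)
      = (∑ m ∈ Finset.Icc 1 (N - 2), (iotaA α β m + iotaB α β m)) + α N := by
    rw [sum_split hN, C_top hN hp]
  have hrefl : ∑ j ∈ Finset.Icc 1 (N - 2), (iotaA α' β' j + iotaB α' β' j)
      = ∑ m ∈ Finset.Icc 1 (N - 2), (iotaA α β m + iotaB α β m) :=
    sum_reflect hN _ _ (fun m h1 h2 => C_rev hN hp h1 h2)
  have hSC' : ∑ m ∈ Finset.Icc 1 (N - 1), (iotaA α' β' m + iotaB α' β' m)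
      = (∑ m ∈ Finset.Icc 1 (N - 2), (iotaA α β m + iotaB α β m)) + α 1 := by
    rw [sum_split hN, hrefl, A_rev_top hN hp, B_rev_top hN hp]
    omega
  -- sums of A and Z
  have hSZ : ∑ m ∈ Finset.Icc 1 (N - 1), zA (α m) (β m) (α (m + 1))
      = (∑ m ∈ Finset.Icc 1 (N - 2), zA (α m) (β m) (α (m + 1)))
        + zA (α (N - 1)) (β (N - 1)) (α N) := by
    rw [sum_split hN]
    have e : N - 1 + 1 = N := by omega
    rw [e]
  have hSA := sumA_p hN hp
  have hSA' : ∑ j ∈ Finset.Icc 1 (N - 1), iotaA α' β' j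
      = (∑ m ∈ Finset.Icc 1 (N - 2), zA (α m) (β m) (α (m + 1))) + α 1 := by
    rw [sum_split hN, A_rev_top hN hp]
    congr 1
    exact sum_reflect hN _ _ (fun m h1 h2 => A_rev_mid hN h1 h2)
  -- s1 via A + B
  have hs1p : s1Gr N α β + ∑ m ∈ Finset.Icc 1 (N - 1), iotaA α β m
      = ∑ m ∈ Finset.Icc 1 (N - 1), (iotaA α β m + iotaB α β m) := by
    unfold s1Gr
    rw [Finset.sum_add_distrib]
    omega
  have hs1q : s1Gr N α' β' + ∑ m ∈ Finset.Icc 1 (N - 1), iotaA α' β' m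
      = ∑ m ∈ Finset.Icc 1 (N - 1), (iotaA α' β' m + iotaB α' β' m) := by
    unfold s1Gr
    rw [Finset.sum_add_distrib]
    omega
  -- s2
  have hs2p : s2Gr N α β = iotaA α β 0
      + ∑ m ∈ Finset.Icc 1 (N - 1), (iotaA α β m + iotaB α β m) := rfl
  have hs2q : s2Gr N α' β' = iotaA α' β' 0
      + ∑ m ∈ Finset.Icc 1 (N - 1), (iotaA α' β' m + iotaB α' β' m) := rfl
  have hq0 : iotaA α' β' 0 = zA (α (N - 1)) (β (N - 1)) (α N) := A_rev_zero hN
  -- X1 + Y1 = α 1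
  have hX1 : xA (α 1) (β 1) (α 2) + iotaA α β 0 = α 1 := by
    have h := (hp.2.2.2.2.2.2 1 le_rfl).facts
    have e : iotaA α β 0 = yA (α 1) (β 1) (α 2) := rfl
    rw [e]
    rw [show (1:ℕ) + 1 = 2 from rfl] at h
    exact h.1
  -- energy sums
  have heP : eGr N α β = (∑ m ∈ Finset.Icc 1 (N - 2), m * (iotaA α β m + iotaB α β m))
      + (N - 1) * (α N) := by
    unfold eGr
    rw [sum_split hN (fun m => m * (iotaA α β m + iotaB α β m)), C_top hN hp]
  have heQ : eGr N α' β' = (∑ m ∈ Finset.Icc 1 (N - 2), (N - 1 - m) * (iotaA α β m + iotaB α β m))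
      + (N - 1) * (α 1) := by
    unfold eGr
    rw [sum_split hN (fun m => m * (iotaA α' β' m + iotaB α' β' m))]
    rw [A_rev_top hN hp, B_rev_top hN hp]
    have e : (N - 1) * (α 1 + 0) = (N - 1) * α 1 := by simp
    rw [e]
    congr 1
    refine sum_reflect hN _ _ (fun m h1 h2 => ?_)
    rw [C_rev hN hp h1 h2]
  have hEE : (∑ m ∈ Finset.Icc 1 (N - 2), m * (iotaA α β m + iotaB α β m))
      + (∑ m ∈ Finset.Icc 1 (N - 2), (N - 1 - m) * (iotaA α β m + iotaB α β m))
      = (N - 1) * ∑ m ∈ Finset.Icc 1 (N - 2), (iotaA α β m + iotaB α β m) := by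
    rw [← Finset.sum_add_distrib, Finset.mul_sum]
    refine Finset.sum_congr rfl (fun m hm => ?_)
    simp only [Finset.mem_Icc] at hm
    rw [← add_mul]
    congr 1
    omega
  have hE : eGr N α' β' + eGr N α β + (N - 1) * iotaA α β 0
      = (N - 1) * α 1 + (N - 1) * s2Gr N α β := by
    rw [heQ, heP, hs2p, hSC, Nat.mul_add, Nat.mul_add]
    linarith [hEE]
  refine ⟨?_, by omega, by omega⟩
  have hNc : ((N - 1 : ℕ) : ℤ) = (N : ℤ) - 1 := by omega
  rw [← hNc]
  exact_mod_cast hE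

end Exps

/-- The set of paths entering a doubly refined character. -/
def PathSet (k N i l i' l' : ℕ) : Set ((ℕ → ℕ) × (ℕ → ℕ)) :=
  {p | IsVerPath k l N p.1 p.2 ∧ p.1 1 + p.2 1 = p.1 2 + 2 * i ∧
       p.1 N = l' ∧ p.1 N + p.2 (N - 1) = p.1 (N - 1) + 2 * i'}

lemma pathSet_finite (k N i l i' l' : ℕ) : (PathSet k N i l i' l').Finite := by
  set S₀ : Set ((ℕ → ℕ) × (ℕ → ℕ)) :=
    {p | (∀ j, p.1 j ≤ k ∧ p.2 j ≤ k) ∧ ∀ j, N < j → p.1 j = 0 ∧ p.2 j = 0} with hS₀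
  have hsub : PathSet k N i l i' l' ⊆ S₀ := by
    rintro p ⟨⟨hα0, hβ0, hα1, hβN, hαt, hβt, hadm⟩, -, -, -⟩
    constructor
    · intro j
      rcases Nat.eq_zero_or_pos j with h | h
      · subst h; rw [hα0, hβ0]; omega
      · have := (hadm j h).facts
        exact ⟨this.2.2.2.1, this.2.2.2.2.1⟩
    · intro j hj
      exact ⟨hαt j hj, hβt j hj⟩
  refine Set.Finite.subset ?_ hsub
  set Ψ : ((ℕ → ℕ) × (ℕ → ℕ)) → ((Fin (N + 1) → Fin (k + 1)) × (Fin (N + 1) → Fin (k + 1))) :=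
    fun p => (fun j => ⟨min (p.1 j) k, by omega⟩, fun j => ⟨min (p.2 j) k, by omega⟩) with hΨ
  refine Set.Finite.of_finite_image (f := Ψ) (Set.toFinite _) ?_
  rintro ⟨α, β⟩ hp ⟨α', β'⟩ hq h
  obtain ⟨hb, ht⟩ := hp
  obtain ⟨hb', ht'⟩ := hq
  have h1 := congrArg Prod.fst h
  have h2 := congrArg Prod.snd h
  simp only [hΨ] at h1 h2
  have key : ∀ γ γ' : ℕ → ℕ, (∀ j, γ j ≤ k) → (∀ j, N < j → γ j = 0) →
      (∀ j, γ' j ≤ k) → (∀ j, N < j → γ' j = 0) →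
      ((fun j : Fin (N + 1) => (⟨min (γ j) k, by omega⟩ : Fin (k + 1))) =
        fun j : Fin (N + 1) => ⟨min (γ' j) k, by omega⟩) → γ = γ' := by
    intro γ γ' hγ hγt hγ' hγt' hh
    funext j
    rcases Nat.lt_or_ge j (N + 1) with hj | hj
    · have := congrFun hh ⟨j, hj⟩
      simp only [Fin.mk.injEq] at this
      have e1 := hγ j
      have e2 := hγ' j
      omega
    · rw [hγt j (by omega), hγt' j (by omega)]
  have e1 : α = α' := key α α' (fun j => (hb j).1) (fun j hj => (ht j hj).1)
    (fun j => (hb' j).1) (fun j hj => (ht' j hj).1) h1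
  have e2 : β = β' := key β β' (fun j => (hb j).2) (fun j hj => (ht j hj).2)
    (fun j => (hb' j).2) (fun j hj => (ht' j hj).2) h2
  simp [e1, e2]

/-- the reversal map on pairs -/
def revP (N : ℕ) (p : (ℕ → ℕ) × (ℕ → ℕ)) : (ℕ → ℕ) × (ℕ → ℕ) :=
  (rev1 N p.1, rev2 N p.1 p.2)

lemma revP_mem {k N i l i' l' : ℕ} (hN : 2 ≤ N) {p : (ℕ → ℕ) × (ℕ → ℕ)}
    (hp : p ∈ PathSet k N i' l' i l) : revP N p ∈ PathSet k N i l i' l' := by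
  obtain ⟨hpath, hc1, hc2, hc3⟩ := hp
  have hrev := rev_isVerPath hN hpath
  rw [hc2] at hrev
  obtain ⟨hα0, hβ0, hα1, hβN, hαt, hβt, hadm⟩ := hpath
  set α := p.1
  set β := p.2
  refine ⟨hrev, ?_, ?_, ?_⟩
  · show rev1 N α 1 + rev2 N α β 1 = rev1 N α 2 + 2 * i
    rw [rev1_apply, rev1_apply, rev2_mid _ _ _ (by omega) (by omega)]
    have e1 : N + 1 - 1 = N := by omega
    have e2 : N + 1 - 2 = N - 1 := by omega
    rw [e1, e2]
    exact hc3
  · show rev1 N α N = l'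
    rw [rev1_apply]
    have e1 : N + 1 - N = 1 := by omega
    rw [e1, hα1]
  · show rev1 N α N + rev2 N α β (N - 1) = rev1 N α (N - 1) + 2 * i'
    rw [rev1_apply, rev1_apply, rev2_mid _ _ _ (by omega) (by omega)]
    have e1 : N + 1 - N = 1 := by omega
    have e2 : N - (N - 1) = 1 := by omega
    have e3 : N + 1 - (N - 1) = 2 := by omega
    rw [e1, e2, e3]
    exact hc1

lemma revP_revP {k w N : ℕ} {p : (ℕ → ℕ) × (ℕ → ℕ)} (hN : 2 ≤ N)
    (hp : IsVerPath k w N p.1 p.2) : revP N (revP N p) = p := by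
  obtain ⟨α, β⟩ := p
  obtain ⟨h1, h2⟩ := rev_rev hN hp
  simp only [revP]
  rw [h1, h2]


/-- The symmetry
`χ^N_k[i,l;i',l'](q,z₁,z₂) = q^{(N-1)(l'-i')} (z₁z₂)^{l'-i'-l+i}
χ^N_k[i',l';i,l](q⁻¹,z₁,q^{N-1}z₂)`. -/
theorem stmt_12 (k N : ℕ) (hk : 1 ≤ k) (hN : 2 ≤ N) (i l i' l' : ℕ)
    (h1 : i ≤ l) (h2 : l ≤ k) (h3 : i' ≤ l') (h4 : l' ≤ k) :
    chiBoth k N i l i' l' =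
      AddMonoidAlgebra.single
        ((((N : ℤ) - 1) * ((l' : ℤ) - (i' : ℤ)) : ℤ),
         ((l' : ℤ) - (i' : ℤ) - (l : ℤ) + (i : ℤ), (l' : ℤ) - (i' : ℤ) - (l : ℤ) + (i : ℤ)))
        (1 : ℤ) *
      subInvQ N (chiBoth k N i' l' i l) := by
  classical
  set v : ℤ × ℤ × ℤ :=
    ((((N : ℤ) - 1) * ((l' : ℤ) - (i' : ℤ)) : ℤ),
     ((l' : ℤ) - (i' : ℤ) - (l : ℤ) + (i : ℤ), (l' : ℤ) - (i' : ℤ) - (l : ℤ) + (i : ℤ))) with hv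
  set T : ℤ × ℤ × ℤ → ℤ × ℤ × ℤ :=
    fun w => (-w.1 + ((N : ℤ) - 1) * w.2.2, w.2.1, w.2.2) with hT
  set F : (ℕ → ℕ) × (ℕ → ℕ) → AddMonoidAlgebra ℤ (ℤ × ℤ × ℤ) :=
    fun p => AddMonoidAlgebra.single
      ((eGr N p.1 p.2 : ℤ), (s1Gr N p.1 p.2 : ℤ), (s2Gr N p.1 p.2 : ℤ)) 1 with hF
  have hL : chiBoth k N i l i' l' = ∑ᶠ p ∈ PathSet k N i l i' l', F p := rfl
  have hL' : chiBoth k N i' l' i l = ∑ᶠ p ∈ PathSet k N i' l' i l, F p := rfl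
  set Φ : AddMonoidAlgebra ℤ (ℤ × ℤ × ℤ) →+ AddMonoidAlgebra ℤ (ℤ × ℤ × ℤ) :=
    (AddMonoidHom.mulLeft (AddMonoidAlgebra.single v (1 : ℤ))).comp
      ((AddMonoidAlgebra.coeffAddEquiv.symm.toAddMonoidHom.comp
        (Finsupp.mapDomain.addMonoidHom T)).comp
        AddMonoidAlgebra.coeffAddEquiv.toAddMonoidHom) with hΦ
  have hR : AddMonoidAlgebra.single v (1 : ℤ) * subInvQ N (chiBoth k N i' l' i l)
      = Φ (chiBoth k N i' l' i l) := rfl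
  rw [hR, hL', AddMonoidHom.map_finsum_mem F Φ (pathSet_finite k N i' l' i l), hL]
  refine (finsum_mem_eq_of_bijOn (revP N) ?_ ?_).symm
  · -- BijOn
    refine ⟨fun p hp => revP_mem hN hp, ?_, ?_⟩
    · intro p hp q hq hpq
      have h1 := revP_revP hN hp.1
      have h2 := revP_revP hN hq.1
      rw [← h1, ← h2, hpq]
    · intro q hq
      exact ⟨revP N q, revP_mem hN hq, revP_revP hN hq.1⟩
  · -- exponent identity
    intro p hp
    obtain ⟨hpath, hc1, hc2, hc3⟩ := hp
    have hexps := exps_rev hN hpath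
    obtain ⟨hE, hS1, hS2⟩ := hexps
    -- identify i' and i
    have hα1 : p.1 1 = l' := hpath.2.2.1
    have hfacts1 := (hpath.2.2.2.2.2.2 1 le_rfl).facts
    rw [show (1:ℕ) + 1 = 2 from rfl] at hfacts1
    have hY0 : iotaA p.1 p.2 0 = yA (p.1 1) (p.2 1) (p.1 2) := rfl
    have hi' : iotaA p.1 p.2 0 = i' := by rw [hY0]; omega
    have hfactsN := (hpath.2.2.2.2.2.2 (N - 1) (by omega)).facts
    rw [show N - 1 + 1 = N from by omega] at hfactsN
    have hi : zA (p.1 (N - 1)) (p.2 (N - 1)) (p.1 N) = i := by omega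
    rw [hi', hα1] at hE hS1 hS2
    rw [hi, hc2] at hS1 hS2
    -- now conclude
    have hj : Φ (F p) = AddMonoidAlgebra.single (v + T ((eGr N p.1 p.2 : ℤ),
        (s1Gr N p.1 p.2 : ℤ), (s2Gr N p.1 p.2 : ℤ))) 1 := by
      have h0 : Φ (F p) = AddMonoidAlgebra.single v 1 * subInvQ N (F p) := rfl
      have h1 : subInvQ N (F p) = AddMonoidAlgebra.single (T ((eGr N p.1 p.2 : ℤ),
          (s1Gr N p.1 p.2 : ℤ), (s2Gr N p.1 p.2 : ℤ))) 1 :=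
          congrArg AddMonoidAlgebra.ofCoeff Finsupp.mapDomain_single
      rw [h0, h1, AddMonoidAlgebra.single_mul_single, mul_one]
    rw [hj, hF]
    congr 1
    show v + T _ = ((eGr N (revP N p).1 (revP N p).2 : ℤ),
      (s1Gr N (revP N p).1 (revP N p).2 : ℤ), (s2Gr N (revP N p).1 (revP N p).2 : ℤ))
    have hrev1 : (revP N p).1 = rev1 N p.1 := rfl
    have hrev2 : (revP N p).2 = rev2 N p.1 p.2 := rfl
    rw [hrev1, hrev2, hv, hT]
    refine Prod.ext ?_ (Prod.ext ?_ ?_)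
    · show ((N : ℤ) - 1) * ((l' : ℤ) - i') + (-(eGr N p.1 p.2 : ℤ)
        + ((N : ℤ) - 1) * (s2Gr N p.1 p.2 : ℤ)) = (eGr N (rev1 N p.1) (rev2 N p.1 p.2) : ℤ)
      linear_combination -hE
    · show (l' : ℤ) - i' - l + i + (s1Gr N p.1 p.2 : ℤ)
        = (s1Gr N (rev1 N p.1) (rev2 N p.1 p.2) : ℤ)
      omega
    · show (l' : ℤ) - i' - l + i + (s2Gr N p.1 p.2 : ℤ)
        = (s2Gr N (rev1 N p.1) (rev2 N p.1 p.2) : ℤ)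
      omega
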